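/- Let C be a triangulated category, S an S-system in C with corresponding null system N of S-acyclic objects, and D a full triangulated subcategory of C. Let S_D = S ∩ Hom(D) be the induced S-system on D, and suppose D satisfies (b_R): for every X ∈ C there exists a morphism s : X → M in S with M ∈ D, or (b_L): for every X ∈ C there exists a morphism s : M → X in S with M ∈ D. Then the natural functor Ψ : D[S_D⁻¹] → C[S⁻¹] is fully faithful, its essential image is a triangulated subcategory of C[S⁻¹], and Ψ is an equivalence of categories whose quasi-inverses are all exact. -/

import Mathlib

open CategoryTheory Limits Pretriangulated ZeroObject

universe v u

variable {C : Type u} [Category.{v} C] [HasZeroObject C] [HasShift C ℤ] [Preadditive C]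
  [∀ n : ℤ, (shiftFunctor C n).Additive] [Pretriangulated C]

/-- A null system in a triangulated category: it contains `0`, is stable under the
translation and its inverse, is closed under cones of morphisms between its objects,
and contains the direct summands of all of its objects. -/
structure IsNullSystem (N : Set C) : Prop where
  zero : (0 : C) ∈ N
  shift : ∀ X : C, X ∈ N ↔ (X⟦(1 : ℤ)⟧ ∈ N)
  tri : ∀ T : Triangle C, (T ∈ distTriang C) → T.obj₁ ∈ N → T.obj₂ ∈ N → T.obj₃ ∈ N
  summand : ∀ (X Y : C) (b : BinaryBicone X Y), b.IsBilimit → b.pt ∈ N → X ∈ N ∧ Y ∈ N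

/-- An S-system in a triangulated category: a localizing class (multiplicative system
with a calculus of left and of right fractions) compatible with the triangulation
(stable under shifts, and commutative squares between distinguished triangles with
vertical morphisms in `S` can be completed by a third morphism in `S`) and saturated
(`s ∈ S` iff the localization functor `Q` sends `s` to an isomorphism). -/
class SSystem (S : MorphismProperty C) : Prop where
  left : S.HasLeftCalculusOfFractions
  right : S.HasRightCalculusOfFractions
  compat : S.IsCompatibleWithTriangulation
  saturated : ∀ ⦃X Y : C⦄ (f : X ⟶ Y), S f ↔ IsIso (S.Q.map f)

instance (S : MorphismProperty C) [h : SSystem S] : S.HasLeftCalculusOfFractions := h.left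
instance (S : MorphismProperty C) [h : SSystem S] : S.HasRightCalculusOfFractions := h.right
instance (S : MorphismProperty C) [h : SSystem S] : S.IsCompatibleWithTriangulation := h.compat

/-- `S(N)`: the class of morphisms `f` admitting a distinguished triangle over `f`
whose cone lies in `N`. -/
def coneClass (N : Set C) : MorphismProperty C := fun X Y f =>
  ∃ (Z : C) (g : Y ⟶ Z) (h : Z ⟶ X⟦(1 : ℤ)⟧),
    (Triangle.mk f g h ∈ distTriang C) ∧ Z ∈ N


/-- A full triangulated subcategory, described by its class of objects: it contains `0`,
is additive (closed under direct sums), stable under the translation and its inverse, and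
contains a cone of every morphism between its objects, up to isomorphism. -/
structure IsTriangulatedSubcategory (Dsub : Set C) : Prop where
  zero : (0 : C) ∈ Dsub
  sum : ∀ (X Y : C) (b : BinaryBicone X Y), b.IsBilimit → X ∈ Dsub → Y ∈ Dsub → b.pt ∈ Dsub
  shift : ∀ X ∈ Dsub, X⟦(1 : ℤ)⟧ ∈ Dsub
  unshift : ∀ X ∈ Dsub, X⟦(-1 : ℤ)⟧ ∈ Dsub
  cone : ∀ T : Triangle C, (T ∈ distTriang C) → T.obj₁ ∈ Dsub → T.obj₂ ∈ Dsub →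
    ∃ Z ∈ Dsub, Nonempty (T.obj₃ ≅ Z)

universe v₂ u₂

variable {D : Type u₂} [Category.{v₂} D] [HasZeroObject D] [HasShift D ℤ] [Preadditive D]
  [∀ n : ℤ, (shiftFunctor D n).Additive] [Pretriangulated D]

/-- A functor between triangulated categories is exact if it commutes with the
translation functors and preserves distinguished triangles. -/
def IsExactFunctor (F : C ⥤ D) : Prop :=
  ∃ cs : F.CommShift ℤ, haveI := cs; F.IsTriangulated

/-- `(RF, ε)` is a right derived functor of `F : C ⥤ D` relative to the S-system `S`:
`RF` is exact and `(RF, ε)` is universal among pairs of an exact functor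
`G : C[S⁻¹] ⥤ D` with a morphism of functors `F ⟶ G ∘ Q`. -/
def IsRightDerivedFunctor (S : MorphismProperty C) [SSystem S]
    (F : C ⥤ D) (RF : S.Localization ⥤ D) (ε : F ⟶ S.Q ⋙ RF) : Prop :=
  IsExactFunctor RF ∧
    ∀ (G : S.Localization ⥤ D), IsExactFunctor G → ∀ ε' : F ⟶ S.Q ⋙ G,
      ∃! η : RF ⟶ G, ε' = ε ≫ CategoryTheory.Functor.whiskerLeft S.Q η

/-- `(LF, ε)` is a left derived functor of `F : C ⥤ D` relative to the S-system `S`: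
`LF` is exact and `(LF, ε)` is universal among pairs of an exact functor
`G : C[S⁻¹] ⥤ D` with a morphism of functors `G ∘ Q ⟶ F`. -/
def IsLeftDerivedFunctor (S : MorphismProperty C) [SSystem S]
    (F : C ⥤ D) (LF : S.Localization ⥤ D) (ε : S.Q ⋙ LF ⟶ F) : Prop :=
  IsExactFunctor LF ∧
    ∀ (G : S.Localization ⥤ D), IsExactFunctor G → ∀ ε' : S.Q ⋙ G ⟶ F,
      ∃! η : G ⟶ LF, ε' = CategoryTheory.Functor.whiskerLeft S.Q η ≫ ε

section AuxFullyFaithful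

open MorphismProperty

variable {A B A' B' : Type*} [Category A] [Category B] [Category A'] [Category B']

lemma core_left (ι : A ⥤ B) [ι.Full] [ι.Faithful]
    (W : MorphismProperty B) (WD : MorphismProperty A)
    [W.HasLeftCalculusOfFractions] [WD.HasLeftCalculusOfFractions]
    (hmap : ∀ ⦃X Y : A⦄ (f : X ⟶ Y), WD f ↔ W (ι.map f))
    (LD : A ⥤ A') (L : B ⥤ B') [LD.IsLocalization WD] [L.IsLocalization W]
    (Ψ : A' ⥤ B') (e : LD ⋙ Ψ ≅ ι ⋙ L)
    (hb : ∀ X : B, ∃ (M : A) (s : X ⟶ ι.obj M), W s) :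
    Ψ.Full ∧ Ψ.Faithful ∧ Ψ.EssSurj := by
  have hessL := Localization.essSurj L W
  have hessLD := Localization.essSurj LD WD
  -- pushing a left fraction from `A` to `B`
  let push : ∀ {X Y : A}, WD.LeftFraction X Y → W.LeftFraction (ι.obj X) (ι.obj Y) :=
    fun ψ => ⟨ι.map ψ.f, ι.map ψ.s, (hmap _).1 ψ.hs⟩
  -- the key compatibility
  have key : ∀ {X Y : A} (ψ : WD.LeftFraction X Y),
      e.inv.app X ≫ Ψ.map (ψ.map LD (Localization.inverts LD WD)) ≫ e.hom.app Y =
        (push ψ).map L (Localization.inverts L W) := by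
    intro X Y ψ
    have : IsIso (L.map (ι.map ψ.s)) := Localization.inverts L W _ ((hmap _).1 ψ.hs)
    have h₁ : e.hom.app Y ≫ L.map (ι.map ψ.s) =
        Ψ.map (LD.map ψ.s) ≫ e.hom.app ψ.Y' := (e.hom.naturality ψ.s).symm
    have h₂ : e.hom.app X ≫ L.map (ι.map ψ.f) =
        Ψ.map (LD.map ψ.f) ≫ e.hom.app ψ.Y' := (e.hom.naturality ψ.f).symm
    have h₃ : (push ψ).map L (Localization.inverts L W) ≫ L.map (ι.map ψ.s) =
        L.map (ι.map ψ.f) := (push ψ).map_comp_map_s L (Localization.inverts L W)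
    rw [← cancel_mono (L.map (ι.map ψ.s)), h₃, Category.assoc, Category.assoc, h₁,
      ← Ψ.map_comp_assoc, ψ.map_comp_map_s LD (Localization.inverts LD WD),
      ← h₂, Iso.inv_hom_id_app_assoc]
  -- fullness on objects in the image of `LD`
  have full0 : ∀ (X Y : A) (g : Ψ.obj (LD.obj X) ⟶ Ψ.obj (LD.obj Y)),
      ∃ h : LD.obj X ⟶ LD.obj Y, Ψ.map h = g := by
    intro X Y g
    obtain ⟨φ, hφ⟩ := Localization.exists_leftFraction L W
      (e.inv.app X ≫ g ≫ e.hom.app Y : L.obj (ι.obj X) ⟶ L.obj (ι.obj Y))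
    obtain ⟨M, t, ht⟩ := hb φ.Y'
    have hsD : WD (ι.preimage (φ.s ≫ t)) := (hmap _).2
      (by rw [ι.map_preimage]; exact W.comp_mem _ _ φ.hs ht)
    let ψ : WD.LeftFraction X Y := ⟨ι.preimage (φ.f ≫ t), ι.preimage (φ.s ≫ t), hsD⟩
    refine ⟨ψ.map LD (Localization.inverts LD WD), ?_⟩
    have hrel : (push ψ).map L (Localization.inverts L W) =
        φ.map L (Localization.inverts L W) := by
      refine (MorphismProperty.LeftFraction.map_eq_iff L W _ _).2
        ⟨ι.obj M, 𝟙 _, t, ?_, ?_, ?_⟩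
      · simp [push, ψ, ι.map_preimage]
      · simp [push, ψ, ι.map_preimage]
      · simpa [push, ψ, ι.map_preimage] using W.comp_mem _ _ φ.hs ht
    have h2 : e.inv.app X ≫ Ψ.map (ψ.map LD (Localization.inverts LD WD)) ≫ e.hom.app Y =
        e.inv.app X ≫ g ≫ e.hom.app Y := by rw [key, hrel, ← hφ]
    rw [cancel_epi (e.inv.app X), cancel_mono (e.hom.app Y)] at h2
    exact h2
  refine ⟨⟨fun {X' Y'} g => ?_⟩, ⟨fun {X' Y'} h₁ h₂ hh => ?_⟩, ⟨fun Y' => ?_⟩⟩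
  · -- Full
    let α := LD.objObjPreimageIso X'
    let β := LD.objObjPreimageIso Y'
    obtain ⟨h₀, hh₀⟩ := full0 _ _ (Ψ.map α.hom ≫ g ≫ Ψ.map β.inv)
    refine ⟨α.inv ≫ h₀ ≫ β.hom, ?_⟩
    simp only [Functor.map_comp, hh₀]
    simp [← Functor.map_comp_assoc, ← Functor.map_comp]
  · -- Faithful
    let α := LD.objObjPreimageIso X'
    let β := LD.objObjPreimageIso Y'
    suffices hsuff : α.hom ≫ h₁ ≫ β.inv = α.hom ≫ h₂ ≫ β.inv by
      have := congrArg (fun k => α.inv ≫ k ≫ β.hom) hsuff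
      simpa using this
    obtain ⟨ψ₁, hψ₁⟩ := Localization.exists_leftFraction LD WD (α.hom ≫ h₁ ≫ β.inv)
    obtain ⟨ψ₂, hψ₂⟩ := Localization.exists_leftFraction LD WD (α.hom ≫ h₂ ≫ β.inv)
    rw [hψ₁, hψ₂]
    have hpush : (push ψ₁).map L (Localization.inverts L W) =
        (push ψ₂).map L (Localization.inverts L W) := by
      rw [← key ψ₁, ← key ψ₂, ← hψ₁, ← hψ₂]
      simp only [Functor.map_comp, hh]
    rw [MorphismProperty.LeftFraction.map_eq_iff] at hpush
    obtain ⟨Z, u, v, hsuv, hfuv, hWsu⟩ := hpush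
    obtain ⟨M, t, ht⟩ := hb Z
    have rel : MorphismProperty.LeftFractionRel ψ₁ ψ₂ := by
      refine ⟨M, ι.preimage (u ≫ t), ι.preimage (v ≫ t), ?_, ?_, ?_⟩
      · apply ι.map_injective
        simp only [Functor.map_comp, ι.map_preimage]
        rw [← Category.assoc, ← Category.assoc]
        exact congrArg (· ≫ t) hsuv
      · apply ι.map_injective
        simp only [Functor.map_comp, ι.map_preimage]
        rw [← Category.assoc, ← Category.assoc]
        exact congrArg (· ≫ t) hfuv
      · refine (hmap _).2 ?_
        rw [Functor.map_comp, ι.map_preimage, ← Category.assoc]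
        exact W.comp_mem _ _ hWsu ht
    exact (MorphismProperty.LeftFraction.map_eq_iff LD WD ψ₁ ψ₂).2 rel
  · -- EssSurj
    obtain ⟨M, s, hs⟩ := hb (L.objPreimage Y')
    exact ⟨LD.obj M, ⟨(e.app M : Ψ.obj (LD.obj M) ≅ L.obj (ι.obj M)) ≪≫
      (Localization.isoOfHom L W s hs).symm ≪≫ L.objObjPreimageIso Y'⟩⟩

lemma core_right (ι : A ⥤ B) [ι.Full] [ι.Faithful]
    (W : MorphismProperty B) (WD : MorphismProperty A)
    [W.HasRightCalculusOfFractions] [WD.HasRightCalculusOfFractions]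
    (hmap : ∀ ⦃X Y : A⦄ (f : X ⟶ Y), WD f ↔ W (ι.map f))
    (LD : A ⥤ A') (L : B ⥤ B') [LD.IsLocalization WD] [L.IsLocalization W]
    (Ψ : A' ⥤ B') (e : LD ⋙ Ψ ≅ ι ⋙ L)
    (hb : ∀ X : B, ∃ (M : A) (s : ι.obj M ⟶ X), W s) :
    Ψ.Full ∧ Ψ.Faithful ∧ Ψ.EssSurj := by
  obtain ⟨hfull, hfaith, hess⟩ := core_left ι.op W.op WD.op
    (fun X Y f => hmap f.unop) LD.op L.op Ψ.op
    ((NatIso.op e.symm : (LD ⋙ Ψ).op ≅ (ι ⋙ L).op) : LD.op ⋙ Ψ.op ≅ ι.op ⋙ L.op)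
    (fun X => by
      obtain ⟨M, s, hs⟩ := hb X.unop
      exact ⟨Opposite.op M, s.op, hs⟩)
  refine ⟨⟨fun {X Y} g => ?_⟩, ⟨fun {X Y} f g h => ?_⟩, ⟨fun Y => ?_⟩⟩
  · obtain ⟨h, hh⟩ := hfull.map_surjective
      (g.op : Ψ.op.obj (Opposite.op Y) ⟶ Ψ.op.obj (Opposite.op X))
    exact ⟨h.unop, Quiver.Hom.op_inj hh⟩
  · exact Quiver.Hom.op_inj (hfaith.map_injective
      (congrArg Quiver.Hom.op h : Ψ.op.map f.op = Ψ.op.map g.op))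
  · have := hess
    exact ⟨(Ψ.op.objPreimage (Opposite.op Y)).unop,
      ⟨(Ψ.op.objObjPreimageIso (Opposite.op Y)).unop.symm⟩⟩

end AuxFullyFaithful

/-- A1.3.2: if `D` is a full triangulated subcategory of `C` (with the induced
triangulated structure and the induced S-system `S_D = S ∩ Hom(D)`) satisfying condition
(b_R) or (b_L), then the natural functor `Ψ : D[S_D⁻¹] ⥤ C[S⁻¹]` is fully faithful, its
essential image is a triangulated subcategory of `C[S⁻¹]`, and `Ψ` is an equivalence of
categories all of whose quasi-inverses are exact. -/
theorem localization_of_adapted_subcategory (S : MorphismProperty C) [SSystem S]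
    (Dsub : Set C) (hD : IsTriangulatedSubcategory Dsub)
    [HasZeroObject (ObjectProperty.FullSubcategory (· ∈ Dsub))]
    [HasShift (ObjectProperty.FullSubcategory (· ∈ Dsub)) ℤ]
    [Preadditive (ObjectProperty.FullSubcategory (· ∈ Dsub))]
    [∀ n : ℤ, (shiftFunctor (ObjectProperty.FullSubcategory (· ∈ Dsub)) n).Additive]
    [Pretriangulated (ObjectProperty.FullSubcategory (· ∈ Dsub))]
    [(ObjectProperty.ι (· ∈ Dsub)).CommShift ℤ]
    -- the triangulated structure on the subcategory is the one induced from `C`: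
    (hind : ∀ T : Triangle (ObjectProperty.FullSubcategory (· ∈ Dsub)),
      (T ∈ distTriang (ObjectProperty.FullSubcategory (· ∈ Dsub))) ↔
        ((ObjectProperty.ι (· ∈ Dsub)).mapTriangle.obj T ∈ distTriang C))
    -- the induced S-system `S_D = S ∩ Hom(D)`:
    (SD : MorphismProperty (ObjectProperty.FullSubcategory (· ∈ Dsub)))
    (hSD : ∀ ⦃X Y : ObjectProperty.FullSubcategory (· ∈ Dsub)⦄ (f : X ⟶ Y),
      SD f ↔ S ((ObjectProperty.ι (· ∈ Dsub)).map f))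
    [SSystem SD]
    -- condition (b_R) or (b_L):
    (hb : (∀ X : C, ∃ M ∈ Dsub, ∃ s : X ⟶ M, S s) ∨
          (∀ X : C, ∃ M ∈ Dsub, ∃ s : M ⟶ X, S s))
    -- the natural functor `Ψ : D[S_D⁻¹] ⥤ C[S⁻¹]`:
    (Ψ : SD.Localization ⥤ S.Localization)
    (hΨ : SD.Q ⋙ Ψ = ObjectProperty.ι (· ∈ Dsub) ⋙ S.Q) :
    (Ψ.Full ∧ Ψ.Faithful) ∧
    IsTriangulatedSubcategory {Y : S.Localization | ∃ X, Nonempty (Ψ.obj X ≅ Y)} ∧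
    Ψ.IsEquivalence ∧
    (∀ Ginv : S.Localization ⥤ SD.Localization,
      Nonempty (Ψ ⋙ Ginv ≅ 𝟭 SD.Localization) → Nonempty (Ginv ⋙ Ψ ≅ 𝟭 S.Localization) →
        IsExactFunctor Ginv) := by
  let ι : ObjectProperty.FullSubcategory (· ∈ Dsub) ⥤ C := ObjectProperty.ι (· ∈ Dsub)
  -- fully faithfulness and essential surjectivity
  obtain ⟨hfull, hfaith, hess⟩ : Ψ.Full ∧ Ψ.Faithful ∧ Ψ.EssSurj := by
    obtain hb | hb := hb
    · exact core_left ι S SD hSD SD.Q S.Q Ψ (eqToIso hΨ)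
        (fun X => by obtain ⟨M, hM, s, hs⟩ := hb X; exact ⟨⟨M, hM⟩, s, hs⟩)
    · exact core_right ι S SD hSD SD.Q S.Q Ψ (eqToIso hΨ)
        (fun X => by obtain ⟨M, hM, s, hs⟩ := hb X; exact ⟨⟨M, hM⟩, s, hs⟩)
  have hequiv : Ψ.IsEquivalence := ⟨hfaith, hfull, hess⟩
  have mem : ∀ Y : S.Localization, ∃ X, Nonempty (Ψ.obj X ≅ Y) := by
    have := hess
    exact fun Y => ⟨Ψ.objPreimage Y, ⟨Ψ.objObjPreimageIso Y⟩⟩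
  -- exactness of `Ψ`
  letI : Localization.Lifting SD.Q SD (ι ⋙ S.Q) Ψ := ⟨eqToIso hΨ⟩
  letI csΨ : Ψ.CommShift ℤ := Functor.commShiftOfLocalization SD.Q SD ℤ (ι ⋙ S.Q) Ψ
  haveI : ι.IsTriangulated := ⟨fun T hT => (hind T).1 hT⟩
  haveI : SD.Q.mapArrow.EssSurj := Localization.essSurj_mapArrow SD.Q SD
  haveI hΨtri : Ψ.IsTriangulated :=
    Functor.isTriangulated_of_precomp_iso (Localization.Lifting.iso SD.Q SD (ι ⋙ S.Q) Ψ)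
  refine ⟨⟨hfull, hfaith⟩, ?_, hequiv, ?_⟩
  · exact
      { zero := mem 0
        sum := fun X Y b _ _ _ => mem b.pt
        shift := fun X _ => mem _
        unshift := fun X _ => mem _
        cone := fun T _ _ _ => ⟨T.obj₃, mem _, ⟨Iso.refl _⟩⟩ }
  · rintro Ginv ⟨η⟩ ⟨θ⟩
    haveI : Ψ.IsLocalization (MorphismProperty.isomorphisms SD.Localization) :=
      Functor.IsLocalization.of_isEquivalence Ψ _ (le_refl _)
    letI : Localization.Lifting Ψ (MorphismProperty.isomorphisms SD.Localization)
      (𝟭 SD.Localization) Ginv := ⟨η⟩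
    letI csG : Ginv.CommShift ℤ := Functor.commShiftOfLocalization Ψ
      (MorphismProperty.isomorphisms SD.Localization) ℤ (𝟭 SD.Localization) Ginv
    haveI : Ψ.mapArrow.EssSurj := inferInstance
    haveI : Ginv.IsTriangulated :=
      Functor.isTriangulated_of_precomp_iso (Localization.Lifting.iso Ψ
        (MorphismProperty.isomorphisms SD.Localization) (𝟭 SD.Localization) Ginv)
    exact ⟨csG, inferInstance⟩
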